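/- Let λ be an n-partition, π an n-permutation, and T a semistandard tableau of shape λ. Then S(T) ≤ Y_λ(π) (entrywise) if and only if T(l,k) ∈ A_λ(T,π;l,k) for every box (l,k) of λ. -/

import Mathlib

/-
Common combinatorial set-up for "Tableaux for Key Polynomials, Demazure
Characters, and Atoms" (Proctor–Willis).

Conventions: a box `(j, i)` means column `j`, row `i`, both 1-indexed.
Partial (remnant) tableaux are encoded by their column-length functions
`c : ℕ → ℕ` (each column of a remnant is a top segment of the original
column), together with the ambient value function `T : ℕ → ℕ → ℕ`.
-/

open scoped BigOperators Classical

noncomputable section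

namespace KeyPoly

open MvPolynomial

/-- An `n`-partition `λ = (λ_1, …, λ_n)` with `λ_1 ≥ … ≥ λ_n ≥ 0`,
recorded as a function on `1, …, n`, vanishing beyond `n`. -/
structure NPartition (n : ℕ) where
  part : ℕ → ℕ
  antitone : ∀ ⦃i j : ℕ⦄, 1 ≤ i → i ≤ j → part j ≤ part i
  outside : ∀ i : ℕ, n < i → part i = 0

variable {n : ℕ}

/-- The column length `ζ_j` of the Young diagram of `λ`. -/
def zeta (lam : NPartition n) (j : ℕ) : ℕ :=
  ((Finset.Icc 1 n).filter fun i => j ≤ lam.part i).card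

/-- The box `(j,i)` (column `j`, row `i`) belongs to the diagram of `λ`. -/
def InShape (lam : NPartition n) (j i : ℕ) : Prop :=
  1 ≤ j ∧ 1 ≤ i ∧ i ≤ n ∧ j ≤ lam.part i

/-- The boxes of the diagram of `λ`, as a finite set of pairs (column, row). -/
def boxes (lam : NPartition n) : Finset (ℕ × ℕ) :=
  (Finset.Icc 1 (lam.part 1) ×ˢ Finset.Icc 1 n).filter fun b => b.1 ≤ lam.part b.2

/-- `T` is a semistandard tableau of shape `λ` with values in `[1,n]`:
rows weakly increase eastward, columns strictly increase southward. -/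
def IsSSYT (lam : NPartition n) (T : ℕ → ℕ → ℕ) : Prop :=
  (∀ j i, InShape lam j i → 1 ≤ T j i ∧ T j i ≤ n) ∧
  (∀ j i, InShape lam (j + 1) i → T j i ≤ T (j + 1) i) ∧
  (∀ j i, InShape lam j (i + 1) → T j i < T j (i + 1))

/-- Normalization: the filling vanishes outside the shape. -/
def ZeroOutside (lam : NPartition n) (T : ℕ → ℕ → ℕ) : Prop :=
  ∀ j i, ¬ InShape lam j i → T j i = 0

/-- `T(l, k+1)`, with the boundary convention `n+1` when `k = ζ_l`. -/
def south (lam : NPartition n) (T : ℕ → ℕ → ℕ) (l k : ℕ) : ℕ :=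
  if InShape lam l (k + 1) then T l (k + 1) else n + 1

/-- `T(l+1, k)`, with the boundary convention `n` when `l = λ_k`. -/
def east (lam : NPartition n) (T : ℕ → ℕ → ℕ) (l k : ℕ) : ℕ :=
  if InShape lam (l + 1) k then T (l + 1) k else n

/-- An `n`-permutation: a tuple `(p 1, …, p n)` of distinct entries from `[1,n]`. -/
def IsNPerm (n : ℕ) (p : ℕ → ℕ) : Prop :=
  Set.BijOn p (Set.Icc 1 n) (Set.Icc 1 n)

/-- The `λ`-key `Y_λ(π)`: column `j` is `π_1, …, π_{ζ_j}` sorted increasingly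
(from top to bottom); zero outside the shape. -/
def keyTab (lam : NPartition n) (p : ℕ → ℕ) (j i : ℕ) : ℕ :=
  if InShape lam j i then
    (((Finset.Icc 1 (zeta lam j)).image p).sort (· ≤ ·)).getD (i - 1) 0
  else 0

/-- A semistandard `T` is a key if the values of each column contain the
values of every column to its east. -/
def colSet (lam : NPartition n) (T : ℕ → ℕ → ℕ) (j : ℕ) : Finset ℕ :=
  (Finset.Icc 1 (zeta lam j)).image (T j)

def IsKey (lam : NPartition n) (T : ℕ → ℕ → ℕ) : Prop :=
  ∀ j j' : ℕ, 1 ≤ j → j ≤ j' → j' ≤ lam.part 1 → colSet lam T j' ⊆ colSet lam T j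

/-! ### The (right) scanning method -/

/-- The next column of the scanning path: the earliest column `h' > h`
(up to `maxCol`) whose column bottom in the remnant `c` is nonempty and has
value weakly larger than the bottom value of column `h`. -/
def nextCol (T : ℕ → ℕ → ℕ) (c : ℕ → ℕ) (maxCol h : ℕ) : Option ℕ :=
  (List.range' (h + 1) (maxCol - h)).find?
    (fun h' => decide (0 < c h' ∧ T h (c h) ≤ T h' (c h')))

/-- Columns of the scanning path (EWIS of column bottoms) starting at column `h`,
with explicit fuel. -/
def pathColsAux (T : ℕ → ℕ → ℕ) (c : ℕ → ℕ) (maxCol : ℕ) : ℕ → ℕ → List ℕ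
  | 0, h => [h]
  | fuel + 1, h =>
    match nextCol T c maxCol h with
    | none => [h]
    | some h' => h :: pathColsAux T c maxCol fuel h'

/-- Columns of the scanning path starting at the bottom of column `j` of the
remnant with column lengths `c`. -/
def pathCols (T : ℕ → ℕ → ℕ) (c : ℕ → ℕ) (maxCol j : ℕ) : List ℕ :=
  pathColsAux T c maxCol maxCol j

/-- Remove the scanning path starting in column `j` from the remnant `c`. -/
def removePath (T : ℕ → ℕ → ℕ) (c : ℕ → ℕ) (maxCol j : ℕ) : ℕ → ℕ :=
  fun h => if h ∈ pathCols T c maxCol j then c h - 1 else c h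

/-- Iterate path removal `r` times, always starting from column `j`. -/
def remnantIter (T : ℕ → ℕ → ℕ) (c0 : ℕ → ℕ) (maxCol j : ℕ) : ℕ → ℕ → ℕ
  | 0 => c0
  | r + 1 => removePath T (remnantIter T c0 maxCol j r) maxCol j

/-- Column lengths of the remnant tableau `T^{(j;i)}`. -/
def remnant (lam : NPartition n) (T : ℕ → ℕ → ℕ) (j i : ℕ) : ℕ → ℕ :=
  remnantIter T (zeta lam) (lam.part 1) j (zeta lam j - i)

/-- The scanning path `P(T; j, i)`, recorded by its list of columns. -/
def scanPath (lam : NPartition n) (T : ℕ → ℕ → ℕ) (j i : ℕ) : List ℕ :=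
  pathCols T (remnant lam T j i) (lam.part 1) j

/-- The scanning value `S(T; j, i)`: the last value of the EWIS from `(j,i)`. -/
def scanValue (lam : NPartition n) (T : ℕ → ℕ → ℕ) (j i : ℕ) : ℕ :=
  T ((scanPath lam T j i).getLastD j)
    (remnant lam T j i ((scanPath lam T j i).getLastD j))

/-- The box `(l,k)` lies on the scanning path `P(T; j, i)`. -/
def InScanPath (lam : NPartition n) (T : ℕ → ℕ → ℕ) (j i l k : ℕ) : Prop :=
  l ∈ scanPath lam T j i ∧ k = remnant lam T j i l

/-- `m(U)` where `U` is the remnant with column lengths `c` restricted to the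
columns `l+1, …, maxCol`:  the maximum of the column-bottom values, with the
convention `m((())) = 1` for the empty tableau. -/
def mEast (T : ℕ → ℕ → ℕ) (c : ℕ → ℕ) (maxCol l : ℕ) : ℕ :=
  max 1 (((Finset.Icc (l + 1) maxCol).filter fun h => 0 < c h).sup fun h => T h (c h))

/-! ### The condition sets A, C, and B -/

/-- The set `A_λ(T, π; l, k)`. -/
def Aset (lam : NPartition n) (T : ℕ → ℕ → ℕ) (p : ℕ → ℕ) (l k : ℕ) : Set ℕ :=
  if keyTab lam p l k < mEast T (remnant lam T l k) (lam.part 1) l then (∅ : Set ℕ)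
  else Set.Icc k (min (keyTab lam p l k) (min (south lam T l k - 1) (east lam T l k)))

/-- The set `C_λ(T, π; l, k)`. -/
def Cset (lam : NPartition n) (T : ℕ → ℕ → ℕ) (p : ℕ → ℕ) (l k : ℕ) : Set ℕ :=
  if l = lam.part 1 then {keyTab lam p l k}
  else if keyTab lam p l k < mEast T (remnant lam T l k) (lam.part 1) l then (∅ : Set ℕ)
  else if mEast T (remnant lam T l k) (lam.part 1) l = keyTab lam p l k then
    Set.Icc k (min (keyTab lam p l k) (min (south lam T l k - 1) (east lam T l k)))
  else {keyTab lam p l k} ∩ Set.Icc k (min (south lam T l k - 1) (east lam T l k))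

/-- The row index `a(l,k;j)`:  the `i` with `(l-1,k) ∈ P(T;j,i)`
(convention `a(l,k;l) = k`). -/
def aIdx (lam : NPartition n) (T : ℕ → ℕ → ℕ) (l k j : ℕ) : ℕ :=
  if j = l then k
  else ((Finset.Icc 1 (zeta lam j)).filter fun i => InScanPath lam T j i (l - 1) k).sup id

/-- The row index `b(l,k;j)`:  the `i` with `(l,k+1) ∈ P(T;j,i)` when `k < ζ_l`,
and `ζ_j + 1` when `k = ζ_l` (convention `b(l,k;l) = k+1`). -/
def bIdx (lam : NPartition n) (T : ℕ → ℕ → ℕ) (l k j : ℕ) : ℕ :=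
  if j = l then k + 1
  else if k = zeta lam l then zeta lam j + 1
  else ((Finset.Icc 1 (zeta lam j)).filter fun i => InScanPath lam T j i l (k + 1)).sup id

/-- `E(l,k;j,i)`:  the value of `T` at the box `(h,m)` of `P(T;j,i)` with `h < l`
maximal (convention `E(l,k;l,k) = k`). -/
def Epath (lam : NPartition n) (T : ℕ → ℕ → ℕ) (l k j i : ℕ) : ℕ :=
  if j = l then k
  else
    T (((scanPath lam T j i).filter fun h => decide (h < l)).foldr max 0)
      (remnant lam T j i (((scanPath lam T j i).filter fun h => decide (h < l)).foldr max 0))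

/-- The set `B_λ(T, π; l, k) = ⋂_{j=1}^{l} ⋃_{i=a(j)}^{b(j)-1} [E(l,k;j,i), Y_λ(π)(j,i)]`. -/
def Bset (lam : NPartition n) (T : ℕ → ℕ → ℕ) (p : ℕ → ℕ) (l k : ℕ) : Set ℕ :=
  {v | ∀ j, 1 ≤ j → j ≤ l →
    ∃ i, aIdx lam T l k j ≤ i ∧ i + 1 ≤ bIdx lam T l k j ∧
      Epath lam T l k j i ≤ v ∧ v ≤ keyTab lam p j i}

/-! ### The left scanning method -/

/-- The largest row `r ≤ c j` of column `j` whose value is at most `x`. -/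
def maxRow (T : ℕ → ℕ → ℕ) (c : ℕ → ℕ) (j x : ℕ) : ℕ :=
  ((Finset.Icc 1 (c j)).filter fun r => T j r ≤ x).sup id

/-- The rows of the maximizing weakly decreasing sequence through columns
`j, j-1, …, 1` with initial bound `x`, in a remnant with column lengths `c`. -/
def leftRows (T : ℕ → ℕ → ℕ) (c : ℕ → ℕ) : ℕ → ℕ → List ℕ
  | 0, _ => []
  | j + 1, x => maxRow T c (j + 1) x :: leftRows T c j (T (j + 1) (maxRow T c (j + 1) x))

/-- The column-1 value at the end of the left scanning path originating at `(j, r)`. -/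
def leftEndVal (T : ℕ → ℕ → ℕ) (c : ℕ → ℕ) (j r : ℕ) : ℕ :=
  T 1 ((leftRows T c j (T j r)).getLastD 0)

/-- Remove the left scanning path originating at `(l, c l)`, together with
all values beneath it, from the remnant `c`. -/
def leftRemovePath (T : ℕ → ℕ → ℕ) (c : ℕ → ℕ) (l : ℕ) : ℕ → ℕ :=
  fun j =>
    if 1 ≤ j ∧ j ≤ l then (leftRows T c l (T l (c l))).getD (l - j) 0 - 1 else c j

/-- Iterate left-path removal `r` times (always for column `l`). -/
def leftRemnantIter (T : ℕ → ℕ → ℕ) (c0 : ℕ → ℕ) (l : ℕ) : ℕ → ℕ → ℕ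
  | 0 => c0
  | r + 1 => leftRemovePath T (leftRemnantIter T c0 l r) l

/-- Column lengths of the left remnant used to compute `M(T; l, i)`:
`T` restricted to its first `l` columns with the left scanning paths
originating at `(l, ζ_l), …, (l, i+1)` (and everything beneath them) removed. -/
def leftRemnant (lam : NPartition n) (T : ℕ → ℕ → ℕ) (l i : ℕ) : ℕ → ℕ :=
  leftRemnantIter T (zeta lam) l (zeta lam l - i)

/-- The left scanning value `M(T; l, i)`. -/
def leftScanValue (lam : NPartition n) (T : ℕ → ℕ → ℕ) (l i : ℕ) : ℕ :=
  leftEndVal T (leftRemnant lam T l i) l i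

/-! ### The condition sets F and G -/

/-- The set `F_λ(T, σ; l, k)`. -/
def Fset (lam : NPartition n) (T : ℕ → ℕ → ℕ) (sg : ℕ → ℕ) (l k : ℕ) : Set ℕ :=
  if l = 1 then Set.Icc (keyTab lam sg 1 k) (south lam T 1 k - 1)
  else
    let U := leftRemnant lam T l k
    let q := maxRow T U (l - 1) (south lam T l k - 1)
    let P := (Finset.Icc 1 q).filter fun h => keyTab lam sg l k ≤ leftEndVal T U (l - 1) h
    if hP : P.Nonempty then Set.Icc (T (l - 1) (P.min' hP)) (south lam T l k - 1)
    else (∅ : Set ℕ)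

/-- The set `G_λ(T, σ; l, k)`. -/
def Gset (lam : NPartition n) (T : ℕ → ℕ → ℕ) (sg : ℕ → ℕ) (l k : ℕ) : Set ℕ :=
  if l = 1 then {keyTab lam sg 1 k}
  else
    let U := leftRemnant lam T l k
    let q := maxRow T U (l - 1) (south lam T l k - 1)
    let P := (Finset.Icc 1 q).filter fun h => leftEndVal T U (l - 1) h = keyTab lam sg l k
    if hP : P.Nonempty then
      Set.Icc (T (l - 1) (P.min' hP))
        (min ((if P.max' hP + 1 ≤ U (l - 1) then T (l - 1) (P.max' hP + 1) else n + 1) - 1)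
          (south lam T l k - 1))
    else (∅ : Set ℕ)

/-! ### Polynomials, divided differences, words -/

/-- Polynomials in the variables `X 1, …, X n` (indexed by `ℕ`) over `ℚ`. -/
abbrev Poly : Type := MvPolynomial ℕ ℚ

/-- The action of `s_i` on polynomials: interchange `x_i` and `x_{i+1}`. -/
def sOp (i : ℕ) (P : Poly) : Poly := rename (Equiv.swap i (i + 1)) P

/-- The divided difference operator
`ρ_i = (x_i - x_{i+1})⁻¹ ∘ (1 - s_i) ∘ x_i`, defined as the unique polynomial
`Q` with `(x_i - x_{i+1}) Q = x_i P - s_i (x_i P)`. -/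
def rhoOp (i : ℕ) (P : Poly) : Poly :=
  if h : ∃ Q : Poly, (X i - X (i + 1)) * Q = X i * P - sOp i (X i * P) then h.choose
  else 0

/-- The operator `ρ̄_i := ρ_i - 1`. -/
def rhoBarOp (i : ℕ) (P : Poly) : Poly := rhoOp i P - P

/-- Apply operators indexed by a word `[i_t, …, i_1]`, rightmost first:
`applyOps f [i_t, …, i_1] P = f i_t (⋯ (f i_1 P))`. -/
def applyOps (f : ℕ → Poly → Poly) : List ℕ → Poly → Poly
  | [], P => P
  | i :: w, P => f i (applyOps f w P)

/-- The monomial `x_1^{λ_1} ⋯ x_n^{λ_n}`. -/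
def lamMonomial (lam : NPartition n) : Poly :=
  ∏ i ∈ Finset.Icc 1 n, X i ^ lam.part i

/-- The weight monomial `x^T = ∏ x_i^{c_i}` of the filling `T`. -/
def weight (lam : NPartition n) (T : ℕ → ℕ → ℕ) : Poly :=
  ∏ b ∈ boxes lam, X (T b.1 b.2)

/-- The simple reflection `s_i` acting by value. -/
def swapVal (i v : ℕ) : ℕ := if v = i then i + 1 else if v = i + 1 then i else v

/-- The permutation `s_{i_t} ⋯ s_{i_1}.(1, 2, …, n)` obtained by applying the
word `w = [i_t, …, i_1]` (rightmost letter first, each acting by value) to the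
identity. -/
def permOfWord (w : List ℕ) : ℕ → ℕ := w.foldr (fun i f => swapVal i ∘ f) id

/-- `w` is a word in letters `s_1, …, s_{n-1}` producing `π` from `(1, …, n)`. -/
def WordFor (n : ℕ) (w : List ℕ) (p : ℕ → ℕ) : Prop :=
  (∀ i ∈ w, 1 ≤ i ∧ i + 1 ≤ n) ∧ ∀ t, 1 ≤ t → t ≤ n → permOfWord w t = p t

/-- `w` is a reduced word for `π`: it produces `π` with minimal length. -/
def IsReducedWord (n : ℕ) (w : List ℕ) (p : ℕ → ℕ) : Prop :=
  WordFor n w p ∧ ∀ w' : List ℕ, WordFor n w' p → w.length ≤ w'.length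

/-- The atom `c_λ(π;x) = ρ̄_{i_t} ⋯ ρ̄_{i_1} . x_1^{λ_1} ⋯ x_n^{λ_n}`, computed
from a choice of reduced word for `π` (it is independent of this choice). -/
def atomPoly (lam : NPartition n) (p : ℕ → ℕ) : Poly :=
  if h : ∃ w : List ℕ, IsReducedWord n w p then
    applyOps rhoBarOp h.choose (lamMonomial lam)
  else 0

/-! ### `S_n^λ` -/

/-- The set `Q_λ` of distinct column lengths of `λ`. -/
def Qset (lam : NPartition n) : Finset ℕ := (Finset.Icc 1 (lam.part 1)).image (zeta lam)

/-- `π ∈ S_n^λ`: an `n`-permutation increasing on each block `[q_{r-1}+1, q_r]`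
cut out by the column lengths of `λ` (equivalently, `π_i < π_j` whenever
`i < j` and no element of `Q_λ` lies in `[i, j)`). -/
def InSnLam (lam : NPartition n) (p : ℕ → ℕ) : Prop :=
  IsNPerm n p ∧ ∀ i j, 1 ≤ i → i < j → j ≤ n →
    (∀ q ∈ Qset lam, q < i ∨ j ≤ q) → p i < p j

end KeyPoly

namespace KeyPoly

variable {n : ℕ}

/-! ### auxiliary lemmas -/

private lemma find?_sorted_lt {q : ℕ → Bool} : ∀ {l : List ℕ}, l.Pairwise (· < ·) →
    ∀ {g : ℕ}, l.find? q = some g → ∀ x ∈ l, x < g → q x = false := by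
  intro l hl
  induction l with
  | nil => intro g hg x hx; simp at hx
  | cons a t ih =>
    intro g hg x hx hxg
    rcases List.pairwise_cons.mp hl with ⟨ha, ht⟩
    by_cases hqa : q a
    · rw [List.find?_cons_of_pos hqa] at hg
      have : g = a := by simpa using hg.symm
      subst this
      rcases List.mem_cons.mp hx with rfl | hx
      · omega
      · exact absurd (ha x hx) (by omega)
    · rw [List.find?_cons_of_neg (by simpa using hqa : ¬ q a = true)] at hg
      rcases List.mem_cons.mp hx with rfl | hx
      · simpa using hqa
      · exact ih ht hg x hx hxg

section ScanAux
variable (T : ℕ → ℕ → ℕ) (c : ℕ → ℕ) (maxCol : ℕ)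

lemma nextCol_some_spec {h g : ℕ} (hg : nextCol T c maxCol h = some g) :
    h < g ∧ g ≤ maxCol ∧ 0 < c g ∧ T h (c h) ≤ T g (c g) ∧
      ∀ x, h < x → x < g → 0 < c x → T x (c x) < T h (c h) := by
  have hmem := List.mem_of_find?_eq_some hg
  have hmr : h + 1 ≤ g ∧ g < h + 1 + (maxCol - h) := by
    have := List.mem_range'_1.mp hmem
    exact this
  have hq : 0 < c g ∧ T h (c h) ≤ T g (c g) := by
    have := List.find?_some hg
    simpa using this
  refine ⟨by omega, by omega, hq.1, hq.2, ?_⟩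
  intro x hx1 hx2 hcx
  have hxmem : x ∈ List.range' (h + 1) (maxCol - h) := by
    rw [List.mem_range'_1]; omega
  have := find?_sorted_lt List.pairwise_lt_range' hg x hxmem hx2
  simp at this
  exact this hcx

lemma nextCol_none_spec {h : ℕ} (hg : nextCol T c maxCol h = none) :
    ∀ x, h < x → x ≤ maxCol → 0 < c x → T x (c x) < T h (c h) := by
  intro x hx1 hx2 hcx
  have hxmem : x ∈ List.range' (h + 1) (maxCol - h) := by
    rw [List.mem_range'_1]; omega
  have := List.find?_eq_none.mp hg x hxmem
  simp at this
  exact this hcx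

/-- The last column of the scanning path, computed directly. -/
def lastCol : ℕ → ℕ → ℕ
  | 0, h => h
  | fuel + 1, h =>
    match nextCol T c maxCol h with
    | none => h
    | some g => lastCol fuel g

lemma pathColsAux_getLastD (fuel : ℕ) : ∀ h d : ℕ,
    (pathColsAux T c maxCol fuel h).getLastD d = lastCol T c maxCol fuel h := by
  induction fuel with
  | zero => intro h d; simp [pathColsAux, lastCol]
  | succ fuel ih =>
    intro h d
    rcases hnc : nextCol T c maxCol h with _ | g
    · simp [pathColsAux, lastCol, hnc]
    · simp only [pathColsAux, lastCol, hnc, List.getLastD_cons]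
      exact ih g h

lemma lastCol_mono (fuel : ℕ) : ∀ h : ℕ,
    T h (c h) ≤ T (lastCol T c maxCol fuel h) (c (lastCol T c maxCol fuel h)) := by
  induction fuel with
  | zero => intro h; simp [lastCol]
  | succ fuel ih =>
    intro h
    rcases hnc : nextCol T c maxCol h with _ | g
    · simp [lastCol, hnc]
    · simp only [lastCol, hnc]
      exact le_trans (nextCol_some_spec T c maxCol hnc).2.2.2.1 (ih g)

lemma lastCol_bounds (fuel : ℕ) : ∀ h : ℕ,
    lastCol T c maxCol fuel h = h ∨
      (h < lastCol T c maxCol fuel h ∧ lastCol T c maxCol fuel h ≤ maxCol ∧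
        0 < c (lastCol T c maxCol fuel h)) := by
  induction fuel with
  | zero => intro h; left; simp [lastCol]
  | succ fuel ih =>
    intro h
    rcases hnc : nextCol T c maxCol h with _ | g
    · left; simp [lastCol, hnc]
    · right
      simp only [lastCol, hnc]
      obtain ⟨h1, h2, h3, _, _⟩ := nextCol_some_spec T c maxCol hnc
      rcases ih g with heq | ⟨b1, b2, b3⟩
      · rw [heq]; exact ⟨h1, h2, h3⟩
      · exact ⟨by omega, b2, b3⟩

lemma lastCol_dom (fuel : ℕ) : ∀ h : ℕ, maxCol ≤ h + fuel →
    ∀ x, h < x → x ≤ maxCol → 0 < c x →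
      T x (c x) ≤ T (lastCol T c maxCol fuel h) (c (lastCol T c maxCol fuel h)) := by
  induction fuel with
  | zero => intro h hf x hx1 hx2 _; omega
  | succ fuel ih =>
    intro h hf x hx1 hx2 hcx
    rcases hnc : nextCol T c maxCol h with _ | g
    · simp only [lastCol, hnc]
      exact le_of_lt (nextCol_none_spec T c maxCol hnc x hx1 hx2 hcx)
    · simp only [lastCol, hnc]
      obtain ⟨h1, h2, _, h4, h5⟩ := nextCol_some_spec T c maxCol hnc
      rcases lt_trichotomy x g with hlt | heq | hgt
      · exact le_trans (le_of_lt (h5 x hx1 hlt hcx)) (le_trans h4 (lastCol_mono T c maxCol fuel g))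
      · rw [heq]; exact lastCol_mono T c maxCol fuel g
      · exact ih g (by omega) x hgt hx2 hcx

lemma lastCol_eq_max (h : ℕ) :
    T (lastCol T c maxCol maxCol h) (c (lastCol T c maxCol maxCol h)) =
      max (T h (c h))
        (((Finset.Icc (h + 1) maxCol).filter fun x => 0 < c x).sup fun x => T x (c x)) := by
  apply le_antisymm
  · rcases lastCol_bounds T c maxCol maxCol h with heq | ⟨b1, b2, b3⟩
    · rw [heq]; exact le_max_left _ _
    · refine le_trans ?_ (le_max_right _ _)
      exact Finset.le_sup (f := fun x => T x (c x))
        (Finset.mem_filter.mpr ⟨Finset.mem_Icc.mpr ⟨by omega, b2⟩, b3⟩)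
  · refine max_le (lastCol_mono T c maxCol maxCol h) (Finset.sup_le ?_)
    intro x hx
    rw [Finset.mem_filter, Finset.mem_Icc] at hx
    exact lastCol_dom T c maxCol maxCol h (by omega) x (by omega) hx.1.2 hx.2

lemma self_mem_pathColsAux (fuel h : ℕ) : h ∈ pathColsAux T c maxCol fuel h := by
  cases fuel with
  | zero => simp [pathColsAux]
  | succ fuel =>
    rcases hnc : nextCol T c maxCol h with _ | g <;> simp [pathColsAux, hnc]

end ScanAux

lemma remnantIter_self (T : ℕ → ℕ → ℕ) (c0 : ℕ → ℕ) (maxCol j : ℕ) (r : ℕ) :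
    remnantIter T c0 maxCol j r j = c0 j - r := by
  induction r with
  | zero => simp [remnantIter]
  | succ r ih =>
    show removePath T (remnantIter T c0 maxCol j r) maxCol j j = _
    rw [removePath]
    simp only [pathCols]
    simp only [self_mem_pathColsAux, ↓reduceIte, ih]
    omega

lemma zeta_ge {lam : NPartition n} {l k : ℕ} (hs : InShape lam l k) : k ≤ zeta lam l := by
  have hsub : Finset.Icc 1 k ⊆ (Finset.Icc 1 n).filter fun i => l ≤ lam.part i := by
    intro i hi
    rw [Finset.mem_Icc] at hi
    rw [Finset.mem_filter, Finset.mem_Icc]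
    exact ⟨⟨hi.1, le_trans hi.2 hs.2.2.1⟩, le_trans hs.2.2.2 (lam.antitone hi.1 hi.2)⟩
  have := Finset.card_le_card hsub
  simpa [zeta, Nat.card_Icc] using this

lemma remnant_self {lam : NPartition n} (T : ℕ → ℕ → ℕ) {l k : ℕ} (hs : InShape lam l k) :
    remnant lam T l k l = k := by
  rw [remnant, remnantIter_self]
  have := zeta_ge hs
  omega

lemma scanValue_eq {lam : NPartition n} (T : ℕ → ℕ → ℕ) {l k : ℕ} (hs : InShape lam l k) :
    scanValue lam T l k =
      max (T l k)
        (((Finset.Icc (l + 1) (lam.part 1)).filter fun x => 0 < remnant lam T l k x).sup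
          fun x => T x (remnant lam T l k x)) := by
  have hc : remnant lam T l k l = k := remnant_self T hs
  rw [scanValue, scanPath, pathCols, pathColsAux_getLastD,
    lastCol_eq_max T (remnant lam T l k) (lam.part 1) l, hc]

lemma zeta_le (lam : NPartition n) (l : ℕ) : zeta lam l ≤ n := by
  have := Finset.card_filter_le (Finset.Icc 1 n) (fun i => l ≤ lam.part i)
  simpa [zeta, Nat.card_Icc] using this

lemma keyTab_pos {lam : NPartition n} {p : ℕ → ℕ} (hp : IsNPerm n p) {l k : ℕ}
    (hs : InShape lam l k) : 1 ≤ keyTab lam p l k := by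
  rw [keyTab, if_pos hs]
  set s := (((Finset.Icc 1 (zeta lam l)).image p).sort (· ≤ ·)) with hsdef
  have hinj : Set.InjOn p ↑(Finset.Icc 1 (zeta lam l)) := by
    apply hp.injOn.mono
    intro x hx
    simp only [Finset.coe_Icc, Set.mem_Icc] at hx ⊢
    exact ⟨hx.1, le_trans hx.2 (zeta_le lam l)⟩
  have hlen : s.length = zeta lam l := by
    rw [hsdef, Finset.length_sort, Finset.card_image_of_injOn hinj, Nat.card_Icc]
    omega
  have hklt : k - 1 < s.length := by
    have := zeta_ge hs
    have hk := hs.2.1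
    omega
  have hmem : s.getD (k-1) 0 ∈ s := by
    rw [List.getD_eq_getElem s 0 hklt]; exact List.getElem_mem hklt
  have hmem2 : s.getD (k-1) 0 ∈ (Finset.Icc 1 (zeta lam l)).image p :=
    (Finset.mem_sort _).mp hmem
  rw [Finset.mem_image] at hmem2
  obtain ⟨i, hi, hpi⟩ := hmem2
  rw [Finset.mem_Icc] at hi
  have : p i ∈ Set.Icc 1 n := hp.mapsTo ⟨hi.1, le_trans hi.2 (zeta_le lam l)⟩
  rw [← hpi]
  exact this.1

lemma row_le_T {lam : NPartition n} {T : ℕ → ℕ → ℕ} (hT : IsSSYT lam T) :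
    ∀ k l, InShape lam l k → k ≤ T l k := by
  intro k
  induction k with
  | zero => intro l hs; omega
  | succ k ih =>
    intro l hs
    obtain ⟨hl1, hk1, hkn, hlp⟩ := hs
    have hs : InShape lam l (k+1) := ⟨hl1, hk1, hkn, hlp⟩
    rcases Nat.eq_zero_or_pos k with rfl | hk
    · exact (hT.1 l 1 hs).1
    · have hs' : InShape lam l k := by
        refine ⟨hl1, hk, by omega, ?_⟩
        exact le_trans hlp (lam.antitone hk (by omega))
      have := hT.2.2 l k hs
      have := ih l hs'
      omega


/-- Theorem 5.1.  `S(T) ≤ Y_λ(π)` iff every entry of `T`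
lies in the corresponding set `A_λ(T, π; l, k)`. -/
theorem scan_le_key_iff_Aset (n : ℕ) (hn : 1 ≤ n) (lam : NPartition n)
    (p : ℕ → ℕ) (hp : IsNPerm n p) (T : ℕ → ℕ → ℕ) (hT : IsSSYT lam T) :
    (∀ j i, InShape lam j i → scanValue lam T j i ≤ keyTab lam p j i) ↔
      (∀ l k, InShape lam l k → T l k ∈ Aset lam T p l k) := by
  have key : ∀ l k, InShape lam l k →
      (scanValue lam T l k ≤ keyTab lam p l k ↔ T l k ∈ Aset lam T p l k) := by
    intro l k hs
    have hy1 : 1 ≤ keyTab lam p l k := keyTab_pos hp hs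
    have hkT : k ≤ T l k := row_le_T hT k l hs
    have hTn : T l k ≤ n := (hT.1 l k hs).2
    have hsouth : T l k ≤ south lam T l k - 1 := by
      rw [south]
      by_cases h : InShape lam l (k + 1)
      · have := hT.2.2 l k h; rw [if_pos h]; omega
      · rw [if_neg h]; omega
    have heast : T l k ≤ east lam T l k := by
      rw [east]
      by_cases h : InShape lam (l + 1) k
      · rw [if_pos h]; exact hT.2.1 l k h
      · rw [if_neg h]; exact hTn
    rw [scanValue_eq T hs, Aset]
    set B := ((Finset.Icc (l + 1) (lam.part 1)).filter fun x => 0 < remnant lam T l k x).sup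
        (fun x => T x (remnant lam T l k x)) with hB
    have hmE : mEast T (remnant lam T l k) (lam.part 1) l = max 1 B := rfl
    by_cases hlt : keyTab lam p l k < mEast T (remnant lam T l k) (lam.part 1) l
    · rw [if_pos hlt]
      rw [hmE] at hlt
      have hBlt : keyTab lam p l k < B := by
        rcases lt_max_iff.mp hlt with h | h
        · omega
        · exact h
      constructor
      · intro hle
        have : B ≤ keyTab lam p l k := le_trans (le_max_right _ _) hle
        omega
      · intro hmem; exact absurd hmem (Set.notMem_empty _)
    · rw [if_neg hlt]
      rw [hmE] at hlt
      have hBle : B ≤ keyTab lam p l k :=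
        le_trans (le_max_right 1 B) (le_of_not_gt hlt)
      rw [Set.mem_Icc]
      constructor
      · intro hle
        have h1 : T l k ≤ keyTab lam p l k := le_trans (le_max_left _ _) hle
        exact ⟨hkT, le_min h1 (le_min hsouth heast)⟩
      · rintro ⟨-, h2⟩
        exact max_le (le_trans h2 (min_le_left _ _)) hBle
  constructor
  · intro H l k hs; exact (key l k hs).mp (H l k hs)
  · intro H j i hs; exact (key j i hs).mpr (H j i hs)


end KeyPoly
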